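/- Fix β > 0 and an integer N ≥ 1. Let θ, φ : [0,∞) → ℝ^N be differentiable and satisfy the N-token transformer system θᵢ′(t) = −(1/N)·Σ_{j=1}^N e^{β·cos(θᵢ(t) − θⱼ(t))}·sin(θᵢ(t) − θⱼ(t)) for every i (and the same equations for φ). Then for every t ≥ 0, max_{1≤i≤N} |θᵢ(t) − φᵢ(t)| ≤ e^{2·C_β·t} · max_{1≤i≤N} |θᵢ(0) − φᵢ(0)|. (Dobrushin's estimate specialized to empirical measures of the N-particle angular dynamics.) -/

import Mathlib

open MeasureTheory Real Filter

/-- The interaction kernel `h_β(θ) = β⁻¹ exp(β cos θ)`. -/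
noncomputable def hBeta (β : ℝ) : ℝ → ℝ := fun θ => β⁻¹ * Real.exp (β * Real.cos θ)

/-- Its derivative `h_β′`. -/
noncomputable def hBeta' (β : ℝ) : ℝ → ℝ := deriv (hBeta β)

/-- `C_β = sup_θ |h_β″(θ)|`. -/
noncomputable def CBeta (β : ℝ) : ℝ := ⨆ θ : ℝ, |deriv (hBeta' β) θ|

lemma hasDerivAt_hBeta (β θ : ℝ) :
    HasDerivAt (hBeta β) (β⁻¹ * (Real.exp (β * Real.cos θ) * (β * -Real.sin θ))) θ := by
  have h1 : HasDerivAt (fun x : ℝ => β * Real.cos x) (β * -Real.sin θ) θ :=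
    (Real.hasDerivAt_cos θ).const_mul β
  exact (h1.exp).const_mul β⁻¹

lemma hBeta'_eq {β : ℝ} (hβ : β ≠ 0) (θ : ℝ) :
    hBeta' β θ = -(Real.exp (β * Real.cos θ) * Real.sin θ) := by
  rw [hBeta', (hasDerivAt_hBeta β θ).deriv]
  field_simp

lemma hasDerivAt_hBeta' {β : ℝ} (hβ : β ≠ 0) (θ : ℝ) :
    HasDerivAt (hBeta' β)
      (Real.exp (β * Real.cos θ) * (β * Real.sin θ * Real.sin θ - Real.cos θ)) θ := by
  have heq : hBeta' β = fun x => -(Real.exp (β * Real.cos x) * Real.sin x) :=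
    funext (hBeta'_eq hβ)
  rw [heq]
  have h1 : HasDerivAt (fun x : ℝ => β * Real.cos x) (β * -Real.sin θ) θ :=
    (Real.hasDerivAt_cos θ).const_mul β
  have h2 := (h1.exp.mul (Real.hasDerivAt_sin θ)).neg
  refine h2.congr_deriv ?_
  ring

lemma deriv_hBeta'_bound {β : ℝ} (hβ : 0 < β) (θ : ℝ) :
    |deriv (hBeta' β) θ| ≤ Real.exp β * (β + 1) := by
  rw [(hasDerivAt_hBeta' hβ.ne' θ).deriv, abs_mul]
  have h1 : |Real.exp (β * Real.cos θ)| ≤ Real.exp β := by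
    rw [abs_of_pos (Real.exp_pos _)]
    exact Real.exp_le_exp.2 (by nlinarith [Real.cos_le_one θ])
  have h2 : |β * Real.sin θ * Real.sin θ - Real.cos θ| ≤ β + 1 := by
    rw [abs_le]
    constructor <;>
      nlinarith [Real.neg_one_le_cos θ, Real.cos_le_one θ, Real.sin_sq_le_one θ,
        sq_nonneg (Real.sin θ)]
  have := mul_le_mul h1 h2 (abs_nonneg _) (le_of_lt (Real.exp_pos β))
  linarith

lemma bddAbove_hBeta'' {β : ℝ} (hβ : 0 < β) :
    BddAbove (Set.range fun θ => |deriv (hBeta' β) θ|) := by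
  refine ⟨Real.exp β * (β + 1), ?_⟩
  rintro _ ⟨θ, rfl⟩
  exact deriv_hBeta'_bound hβ θ

lemma abs_le_CBeta {β : ℝ} (hβ : 0 < β) (θ : ℝ) :
    |deriv (hBeta' β) θ| ≤ CBeta β :=
  le_ciSup (bddAbove_hBeta'' hβ) θ

lemma CBeta_nonneg {β : ℝ} (hβ : 0 < β) : 0 ≤ CBeta β :=
  le_trans (abs_nonneg _) (abs_le_CBeta hβ 0)

lemma hBeta'_lip {β : ℝ} (hβ : 0 < β) (a b : ℝ) :
    |hBeta' β a - hBeta' β b| ≤ CBeta β * |a - b| := by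
  have := Convex.norm_image_sub_le_of_norm_deriv_le (s := (Set.univ : Set ℝ)) (f := hBeta' β)
    (fun x _ => (hasDerivAt_hBeta' hβ.ne' x).differentiableAt)
    (fun x _ => abs_le_CBeta hβ x) convex_univ (Set.mem_univ b) (Set.mem_univ a)
  simpa [Real.norm_eq_abs] using this

lemma ciSup_abs_eq_norm {N : ℕ} [Nonempty (Fin N)] (x : Fin N → ℝ) :
    (⨆ i : Fin N, |x i|) = ‖x‖ := by
  apply le_antisymm
  · exact ciSup_le fun i => by simpa [Real.norm_eq_abs] using norm_le_pi_norm x i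
  · have hb : BddAbove (Set.range fun i : Fin N => |x i|) :=
      Set.Finite.bddAbove (Set.finite_range _)
    have hnn : 0 ≤ ⨆ i : Fin N, |x i| :=
      le_trans (abs_nonneg _) (le_ciSup hb (Classical.arbitrary _))
    rw [pi_norm_le_iff_of_nonneg hnn]
    intro i
    simpa [Real.norm_eq_abs] using le_ciSup hb i

/-- Dobrushin's estimate specialized to empirical measures of the N-particle angular dynamics. -/
theorem dobrushin_particles (β : ℝ) (hβpos : 0 < β) (N : ℕ) (hN : 1 ≤ N)
    (θ φ : ℝ → Fin N → ℝ)
    (hθ : ∀ i : Fin N, ∀ t, 0 ≤ t →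
      HasDerivWithinAt (fun s => θ s i)
        (-(1 / (N : ℝ)) * ∑ j : Fin N,
          Real.exp (β * Real.cos (θ t i - θ t j)) * Real.sin (θ t i - θ t j))
        (Set.Ici 0) t)
    (hφ : ∀ i : Fin N, ∀ t, 0 ≤ t →
      HasDerivWithinAt (fun s => φ s i)
        (-(1 / (N : ℝ)) * ∑ j : Fin N,
          Real.exp (β * Real.cos (φ t i - φ t j)) * Real.sin (φ t i - φ t j))
        (Set.Ici 0) t)
    (t : ℝ) (ht : 0 ≤ t) :
    (⨆ i : Fin N, |θ t i - φ t i|) ≤ Real.exp (2 * CBeta β * t) * ⨆ i : Fin N, |θ 0 i - φ 0 i| := by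
  haveI : Nonempty (Fin N) := Fin.pos_iff_nonempty.mp hN
  set C := CBeta β with hC
  have hNpos : (0 : ℝ) < N := by positivity
  set F : ℝ → Fin N → ℝ := fun s i => θ s i - φ s i with hF
  set F' : ℝ → Fin N → ℝ := fun s i =>
    (1 / (N : ℝ)) * ∑ j : Fin N,
      (hBeta' β (θ s i - θ s j) - hBeta' β (φ s i - φ s j)) with hF'
  -- derivative of F
  have hderiv : ∀ s, 0 ≤ s → HasDerivWithinAt F (F' s) (Set.Ici 0) s := by
    intro s hs
    rw [hasDerivWithinAt_pi]
    intro i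
    have h := (hθ i s hs).sub (hφ i s hs)
    refine h.congr_deriv ?_
    simp only [hF', hBeta'_eq hβpos.ne']
    simp only [Finset.sum_sub_distrib, Finset.sum_neg_distrib]
    ring
  -- bound on the derivative
  have hbound : ∀ s, 0 ≤ s → ‖F' s‖ ≤ (2 * C) * ‖F s‖ + 0 := by
    intro s hs
    rw [add_zero]
    have hnn : 0 ≤ (2 * C) * ‖F s‖ :=
      mul_nonneg (by linarith [CBeta_nonneg hβpos]) (norm_nonneg _)
    rw [pi_norm_le_iff_of_nonneg hnn]
    intro i
    rw [Real.norm_eq_abs]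
    have hterm : ∀ j : Fin N,
        |hBeta' β (θ s i - θ s j) - hBeta' β (φ s i - φ s j)| ≤ (2 * C) * ‖F s‖ := by
      intro j
      have h1 := hBeta'_lip hβpos (θ s i - θ s j) (φ s i - φ s j)
      have h2 : |(θ s i - θ s j) - (φ s i - φ s j)| ≤ ‖F s‖ + ‖F s‖ := by
        have hi : |F s i| ≤ ‖F s‖ := by
          simpa [Real.norm_eq_abs] using norm_le_pi_norm (F s) i
        have hj : |F s j| ≤ ‖F s‖ := by
          simpa [Real.norm_eq_abs] using norm_le_pi_norm (F s) j
        calc |(θ s i - θ s j) - (φ s i - φ s j)| = |F s i - F s j| := by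
              simp only [hF]; ring_nf
          _ ≤ |F s i| + |F s j| := abs_sub _ _
          _ ≤ ‖F s‖ + ‖F s‖ := add_le_add hi hj
      calc |hBeta' β (θ s i - θ s j) - hBeta' β (φ s i - φ s j)|
          ≤ C * |(θ s i - θ s j) - (φ s i - φ s j)| := h1
        _ ≤ C * (‖F s‖ + ‖F s‖) :=
            mul_le_mul_of_nonneg_left h2 (CBeta_nonneg hβpos)
        _ = (2 * C) * ‖F s‖ := by ring
    calc |F' s i| ≤ (1 / (N : ℝ)) * ∑ j : Fin N,
          |hBeta' β (θ s i - θ s j) - hBeta' β (φ s i - φ s j)| := by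
          rw [hF', abs_mul, abs_of_pos (by positivity : (0:ℝ) < 1 / (N:ℝ))]
          exact mul_le_mul_of_nonneg_left (Finset.abs_sum_le_sum_abs _ _) (by positivity)
      _ ≤ (1 / (N : ℝ)) * ∑ _j : Fin N, (2 * C) * ‖F s‖ := by
          apply mul_le_mul_of_nonneg_left _ (by positivity)
          exact Finset.sum_le_sum fun j _ => hterm j
      _ = (2 * C) * ‖F s‖ := by
          rw [Finset.sum_const, Finset.card_univ, Fintype.card_fin, nsmul_eq_mul]
          field_simp
  -- Grönwall
  have hcont : ContinuousOn F (Set.Icc 0 t) := fun s hs =>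
    ((hderiv s hs.1).continuousWithinAt).mono Set.Icc_subset_Ici_self
  have hgron := norm_le_gronwallBound_of_norm_deriv_right_le (f := F) (f' := F')
    (δ := ‖F 0‖) (K := 2 * C) (ε := 0) (a := 0) (b := t) hcont
    (fun x hx => (hderiv x hx.1).mono (Set.Ici_subset_Ici.2 hx.1))
    le_rfl (fun x hx => hbound x hx.1) t (Set.mem_Icc.2 ⟨ht, le_rfl⟩)
  rw [sub_zero, gronwallBound_ε0] at hgron
  calc (⨆ i : Fin N, |θ t i - φ t i|) = ‖F t‖ := ciSup_abs_eq_norm _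
    _ ≤ ‖F 0‖ * Real.exp (2 * C * t) := hgron
    _ = Real.exp (2 * CBeta β * t) * ⨆ i : Fin N, |θ 0 i - φ 0 i| := by
        rw [← ciSup_abs_eq_norm (F 0)]
        simp only [hF, hC]
        ring
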